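/- For the positive-orthant constraint set C₊ = {p ∈ ℍⁿ_κ : p ≥ 0}, the intrinsic κ-projection of any p ∈ ℍⁿ_κ is P_{C₊}(p) = p⁺ / √(−κ⟨p⁺, p⁺⟩), where p⁺ is the componentwise positive part of p. -/

import Mathlib

noncomputable section

/-- Lorentzian inner product on ℝ^{n+1}. -/
def lip {n : ℕ} (x y : Fin (n+1) → ℝ) : ℝ :=
  (∑ i : Fin n, x i.castSucc * y i.castSucc) - x (Fin.last n) * y (Fin.last n)

/-- Lorentzian norm (of vectors with nonnegative self-product). -/
def lnorm {n : ℕ} (x : Fin (n+1) → ℝ) : ℝ := Real.sqrt (lip x x)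

/-- Euclidean dot product. -/
def edot {n : ℕ} (x y : Fin (n+1) → ℝ) : ℝ := ∑ i, x i * y i

/-- The matrix J = diag(1,…,1,−1) as a map. -/
def Jm {n : ℕ} (x : Fin (n+1) → ℝ) : Fin (n+1) → ℝ :=
  fun i => if i = Fin.last n then -(x i) else x i

/-- The κ-hyperbolic space form (hyperboloid model). -/
def Hyp {n : ℕ} (κ : ℝ) : Set (Fin (n+1) → ℝ) :=
  {p | lip p p = -1/κ ∧ 0 < p (Fin.last n)}

/-- Inverse hyperbolic cosine. -/
def arcosh (x : ℝ) : ℝ := Real.log (x + Real.sqrt (x^2 - 1))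

/-- Intrinsic distance on the κ-hyperbolic space form. -/
def dH {n : ℕ} (κ : ℝ) (p q : Fin (n+1) → ℝ) : ℝ :=
  (1 / Real.sqrt κ) * arcosh (-(κ * lip p q))

/-- Lorentzian projection onto the tangent space at p. -/
def projT {n : ℕ} (κ : ℝ) (p x : Fin (n+1) → ℝ) : Fin (n+1) → ℝ :=
  x + (κ * lip p x) • p

/-- Logarithm map of the κ-hyperbolic space form. -/
def logH {n : ℕ} (κ : ℝ) (p q : Fin (n+1) → ℝ) : Fin (n+1) → ℝ :=
  (dH κ p q / lnorm (projT κ p q)) • projT κ p q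

/-- Exponential map of the κ-hyperbolic space form. -/
def expH {n : ℕ} (κ : ℝ) (p v : Fin (n+1) → ℝ) : Fin (n+1) → ℝ :=
  Real.cosh (Real.sqrt κ * lnorm v) • p +
    (Real.sinh (Real.sqrt κ * lnorm v) / (Real.sqrt κ * lnorm v)) • v

/-- The cone spanned by a set. -/
def coneOf {n : ℕ} (C : Set (Fin (n+1) → ℝ)) : Set (Fin (n+1) → ℝ) :=
  {x | ∃ t : ℝ, 0 ≤ t ∧ ∃ p ∈ C, x = t • p}

/-- The Lorentz cone. -/
def LorentzCone {n : ℕ} : Set (Fin (n+1) → ℝ) :=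
  {x | lip x x ≤ 0 ∧ 0 ≤ x (Fin.last n)}

/-- The interior of the Lorentz cone. -/
def LorentzConeInt {n : ℕ} : Set (Fin (n+1) → ℝ) :=
  {x | lip x x < 0 ∧ 0 < x (Fin.last n)}

lemma lip_smul_right {n : ℕ} (a : ℝ) (x y : Fin (n+1) → ℝ) :
    lip x (a • y) = a * lip x y := by
  simp only [lip, Pi.smul_apply, smul_eq_mul, Finset.mul_sum, mul_sub]
  congr 1
  · exact Finset.sum_congr rfl fun i _ => by ring
  · ring

lemma lip_smul_left {n : ℕ} (a : ℝ) (x y : Fin (n+1) → ℝ) :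
    lip (a • x) y = a * lip x y := by
  simp only [lip, Pi.smul_apply, smul_eq_mul, Finset.mul_sum, mul_sub]
  congr 1
  · exact Finset.sum_congr rfl fun i _ => by ring
  · ring

private lemma aux_le_of_sq_le {S ab : ℝ} (h : S ^ 2 ≤ ab ^ 2) (h2 : 0 ≤ ab) : S ≤ ab := by
  nlinarith

private lemma aux_neg_le {A B : ℝ} (hA : A < 0) (hB : B < 0) (h : B ^ 2 ≤ A ^ 2) : A ≤ B := by
  nlinarith

private lemma aux_key {S xt qt a b : ℝ} (hab : S ≤ a * b) (hann : 0 ≤ a) (hbnn : 0 ≤ b)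
    (halt : a < xt) (hblt : b < qt) :
    (S - xt * qt) ^ 2 ≥ (xt ^ 2 - a ^ 2) * (qt ^ 2 - b ^ 2) := by
  have h2b : 0 ≤ 2 * xt * qt - S - a * b := by nlinarith
  nlinarith [mul_nonneg (sub_nonneg.2 hab) h2b, sq_nonneg (xt * b - qt * a)]

private lemma aux_neg' {S xt qt a b : ℝ} (hab : S ≤ a * b) (hann : 0 ≤ a) (hbnn : 0 ≤ b)
    (halt : a < xt) (hblt : b < qt) : S - xt * qt < 0 := by
  nlinarith


/-- Formula for the intrinsic κ-projection onto the positive-orthant constraint set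
C₊ = {p ∈ ℍⁿ_κ : p ≥ 0}: P_{C₊}(p) = p⁺/√(−κ⟨p⁺,p⁺⟩), where P_{C₊}(p) is the
(unique) maximizer of ⟨p,·⟩ over C₊ and p⁺ is the componentwise positive part. -/
theorem intrinsic_projection_positive_orthant {n : ℕ} (κ : ℝ) (hκ : 0 < κ)
    (p : Fin (n+1) → ℝ) (hp : p ∈ Hyp κ)
    (Pc : Fin (n+1) → ℝ)
    (hPmem : Pc ∈ {q : Fin (n+1) → ℝ | q ∈ Hyp κ ∧ ∀ i, 0 ≤ q i})
    (hPmax : ∀ q ∈ {q : Fin (n+1) → ℝ | q ∈ Hyp κ ∧ ∀ i, 0 ≤ q i}, lip p q ≤ lip p Pc)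
    (hPuniq : ∀ y ∈ {q : Fin (n+1) → ℝ | q ∈ Hyp κ ∧ ∀ i, 0 ≤ q i},
      (∀ q ∈ {q : Fin (n+1) → ℝ | q ∈ Hyp κ ∧ ∀ i, 0 ≤ q i}, lip p q ≤ lip p y) → y = Pc) :
    Pc = (Real.sqrt (-(κ * lip (fun i => max (p i) 0) (fun i => max (p i) 0))))⁻¹ •
      (fun i => max (p i) 0) := by
  obtain ⟨hpp, hplast⟩ := hp
  set P : Fin (n+1) → ℝ := fun i => max (p i) 0 with hPdef
  have hPlast : P (Fin.last n) = p (Fin.last n) := max_eq_left hplast.le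
  set xt : ℝ := p (Fin.last n) with hxt
  set Sx : ℝ := ∑ i : Fin n, P i.castSucc ^ 2 with hSx
  have hSxnn : 0 ≤ Sx := Finset.sum_nonneg fun i _ => sq_nonneg _
  have hlipPP : lip P P = Sx - xt ^ 2 := by
    simp only [lip, hPlast, ← hxt, hSx, sq]
  have hSx_le : Sx ≤ ∑ i : Fin n, p i.castSucc ^ 2 := by
    refine Finset.sum_le_sum fun i _ => ?_
    rcases le_or_gt (p i.castSucc) 0 with h | h
    · simp only [hPdef, max_eq_right h]
      simpa using sq_nonneg (p i.castSucc)
    · simp [hPdef, max_eq_left h.le]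
  have hlippp : lip p p = (∑ i : Fin n, p i.castSucc ^ 2) - xt ^ 2 := by
    simp only [lip, ← hxt, sq]
  have hLx_le : lip P P ≤ -1/κ := by
    rw [hlipPP]; rw [hlippp] at hpp; linarith
  have hmκ : -1/κ < 0 := div_neg_of_neg_of_pos (by norm_num) hκ
  have hLxneg : lip P P < 0 := lt_of_le_of_lt hLx_le hmκ
  set L : ℝ := lip P P with hL
  set c : ℝ := Real.sqrt (-(κ * L)) with hcdef
  have hcLpos : 0 < -(κ * L) := neg_pos.2 (mul_neg_of_pos_of_neg hκ hLxneg)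
  have hcpos : 0 < c := Real.sqrt_pos.2 hcLpos
  have hc2 : c ^ 2 = -(κ * L) := Real.sq_sqrt hcLpos.le
  have hcne : c ≠ 0 := hcpos.ne'
  -- lip p P = lip P P
  have hlippP : lip p P = L := by
    rw [hL]
    simp only [lip, hPlast]
    congr 1
    refine Finset.sum_congr rfl fun i _ => ?_
    rcases le_or_gt (p i.castSucc) 0 with h | h
    · simp [hPdef, max_eq_right h]
    · simp [hPdef, max_eq_left h.le]
  set q' : Fin (n+1) → ℝ := c⁻¹ • P with hq'
  have hq'mem : q' ∈ {q : Fin (n+1) → ℝ | q ∈ Hyp κ ∧ ∀ i, 0 ≤ q i} := by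
    refine ⟨⟨?_, ?_⟩, fun i => ?_⟩
    · rw [hq', lip_smul_left, lip_smul_right, ← hL]
      field_simp
      linear_combination hc2
    · rw [hq']
      simp only [Pi.smul_apply, smul_eq_mul, hPlast]
      exact mul_pos (inv_pos.2 hcpos) hplast
    · rw [hq']
      simp only [Pi.smul_apply, smul_eq_mul, hPdef]
      exact mul_nonneg (by positivity) (le_max_right _ _)
  have hq'max : ∀ q ∈ {q : Fin (n+1) → ℝ | q ∈ Hyp κ ∧ ∀ i, 0 ≤ q i},
      lip p q ≤ lip p q' := by
    rintro q ⟨⟨hqq, hqlast⟩, hqnn⟩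
    have step1 : lip p q ≤ lip P q := by
      simp only [lip, hPlast]
      have : (∑ i : Fin n, p i.castSucc * q i.castSucc) ≤
          ∑ i : Fin n, P i.castSucc * q i.castSucc :=
        Finset.sum_le_sum fun i _ =>
          mul_le_mul_of_nonneg_right (le_max_left _ _) (hqnn _)
      linarith
    set S : ℝ := ∑ i : Fin n, P i.castSucc * q i.castSucc with hS
    set Sq : ℝ := ∑ i : Fin n, q i.castSucc ^ 2 with hSq
    set qt : ℝ := q (Fin.last n) with hqt
    have hSqnn : 0 ≤ Sq := Finset.sum_nonneg fun i _ => sq_nonneg _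
    have hlipPq : lip P q = S - xt * qt := by
      simp only [lip, hPlast, ← hxt, ← hqt, hS]
    have hCS : S ^ 2 ≤ Sx * Sq :=
      Finset.sum_mul_sq_le_sq_mul_sq _ _ _
    have hlipqq : lip q q = Sq - qt ^ 2 := by simp only [lip, ← hqt, sq, hSq]
    have hqqneg : lip q q < 0 := by rw [hqq]; exact hmκ
    have hSqlt : Sq < qt ^ 2 := by rw [hlipqq] at hqqneg; linarith
    have hSxlt : Sx < xt ^ 2 := by linarith [hLxneg, hlipPP]
    set a : ℝ := Real.sqrt Sx with ha
    set b : ℝ := Real.sqrt Sq with hb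
    have ha2 : a ^ 2 = Sx := Real.sq_sqrt hSxnn
    have hb2 : b ^ 2 = Sq := Real.sq_sqrt hSqnn
    have hann : 0 ≤ a := Real.sqrt_nonneg _
    have hbnn : 0 ≤ b := Real.sqrt_nonneg _
    have halt : a < xt := (Real.sqrt_lt' hplast).2 hSxlt
    have hblt : b < qt := (Real.sqrt_lt' hqlast).2 hSqlt
    have hab : S ≤ a * b :=
      aux_le_of_sq_le (by rw [mul_pow, ha2, hb2]; exact hCS) (mul_nonneg hann hbnn)
    have key : (S - xt * qt) ^ 2 ≥ (xt ^ 2 - Sx) * (qt ^ 2 - Sq) := by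
      rw [← ha2, ← hb2]
      exact aux_key hab hann hbnn halt hblt
    have hneg : S - xt * qt < 0 := aux_neg' hab hann hbnn halt hblt
    -- now: lip P q ≤ c⁻¹ * L
    have hLeq : L = Sx - xt ^ 2 := hlipPP
    have hq2 : qt ^ 2 - Sq = 1 / κ := by
      have h := hqq
      rw [hlipqq] at h
      linear_combination -h
    have hmul : c * (S - xt * qt) ≤ L := by
      have hA2 : (c * (S - xt * qt)) ^ 2 ≥ L ^ 2 := by
        have h1 : (S - xt * qt) ^ 2 ≥ (xt ^ 2 - Sx) * (1 / κ) := by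
          rw [← hq2]; exact key
        have hc2' : c ^ 2 = κ * (xt ^ 2 - Sx) := by rw [hc2]; linear_combination -κ * hLeq
        have hxS : 0 < xt ^ 2 - Sx := by linarith
        calc (c * (S - xt * qt)) ^ 2 = c ^ 2 * (S - xt * qt) ^ 2 := by ring
          _ ≥ κ * (xt ^ 2 - Sx) * ((xt ^ 2 - Sx) * (1 / κ)) := by
              rw [hc2']
              apply mul_le_mul_of_nonneg_left h1 (by positivity)
          _ = (xt ^ 2 - Sx) ^ 2 := by field_simp
          _ = L ^ 2 := by rw [hLeq]; ring
      exact aux_neg_le (mul_neg_of_pos_of_neg hcpos hneg) hLxneg hA2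
    have step2 : lip P q ≤ c⁻¹ * L := by
      rw [hlipPq, inv_mul_eq_div, le_div_iff₀ hcpos]
      linarith [hmul, mul_comm c (S - xt * qt)]
    have hlippq' : lip p q' = c⁻¹ * L := by
      rw [hq', lip_smul_right, hlippP]
    linarith [step1, step2, hlippq'.ge, hlippq'.le]
  have := hPuniq q' hq'mem hq'max
  rw [← this]
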